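/- For size expressions a and b, a ≃_A b (i.e., a ≤_A b and b ≤_A a) if and only if a↓ = b↓, where a↓ denotes the normal form of a with respect to the rule s∞ → ∞. -/
import Mathlib


/-- Size expressions of the size algebra A: a ::= α | s a | ∞. -/
inductive SExpr : Type
  | var : ℕ → SExpr
  | s : SExpr → SExpr
  | infty : SExpr
deriving DecidableEq

/-- The quasi-ordering ≤_A on size expressions. -/
inductive SLe : SExpr → SExpr → Prop
  | refl (a) : SLe a a
  | trans {a b c} : SLe a b → SLe b c → SLe a c
  | mon {a b} : SLe a b → SLe (.s a) (.s b)
  | succ {a b} : SLe a b → SLe a (.s b)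
  | infty (a) : SLe a .infty

/-- Normal form w.r.t. the rewrite rule s∞ → ∞. -/
def nf : SExpr → SExpr
  | .var α => .var α
  | .infty => .infty
  | .s a =>
    match nf a with
    | .infty => .infty
    | b => .s b

/-- Action of a size substitution on size expressions. -/
def subst (φ : ℕ → SExpr) : SExpr → SExpr
  | .var α => φ α
  | .s a => .s (subst φ a)
  | .infty => .infty

/-- Code of a size expression: `none` if its normal form is ∞,
otherwise the variable and number of successors. -/
def count : SExpr → Option (ℕ × ℕ)
  | .var α => some (α, 0)
  | .infty => none
  | .s a => (count a).map (fun p => (p.1, p.2 + 1))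

def rel (x y : Option (ℕ × ℕ)) : Prop :=
  match y with
  | none => True
  | some q =>
    match x with
    | none => False
    | some p => p.1 = q.1 ∧ p.2 ≤ q.2

lemma rel_refl (x : Option (ℕ × ℕ)) : rel x x := by
  cases x with
  | none => trivial
  | some p => exact ⟨rfl, le_refl _⟩

lemma rel_trans {x y z : Option (ℕ × ℕ)} (h1 : rel x y) (h2 : rel y z) : rel x z := by
  cases z with
  | none => trivial
  | some r =>
    cases y with
    | none => exact h2.elim
    | some q =>
      cases x with
      | none => exact h1.elim
      | some p => exact ⟨h1.1.trans h2.1, h1.2.trans h2.2⟩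

lemma rel_mon {x y : Option (ℕ × ℕ)} (h : rel x y) :
    rel (x.map fun p => (p.1, p.2 + 1)) (y.map fun p => (p.1, p.2 + 1)) := by
  cases y with
  | none => trivial
  | some q =>
    cases x with
    | none => exact h.elim
    | some p => exact ⟨h.1, Nat.succ_le_succ h.2⟩

lemma rel_succ {x y : Option (ℕ × ℕ)} (h : rel x y) :
    rel x (y.map fun p => (p.1, p.2 + 1)) := by
  cases y with
  | none => trivial
  | some q =>
    cases x with
    | none => exact h.elim
    | some p => exact ⟨h.1, h.2.trans (Nat.le_succ _)⟩

lemma rel_sound {a b : SExpr} (h : SLe a b) : rel (count a) (count b) := by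
  induction h with
  | refl a => exact rel_refl _
  | trans h1 h2 ih1 ih2 => exact rel_trans ih1 ih2
  | mon h ih => exact rel_mon ih
  | succ h ih => exact rel_succ ih
  | infty a => trivial

lemma rel_antisymm {x y : Option (ℕ × ℕ)} (h1 : rel x y) (h2 : rel y x) : x = y := by
  cases x with
  | none => cases y with
    | none => rfl
    | some q => exact h1.elim
  | some p => cases y with
    | none => exact h2.elim
    | some q =>
      obtain ⟨h1a, h1b⟩ := h1
      obtain ⟨_, h2b⟩ := h2
      exact congrArg some (Prod.ext h1a (le_antisymm h1b h2b))

def sIter : ℕ → SExpr → SExpr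
  | 0, e => e
  | n + 1, e => .s (sIter n e)

def decode : Option (ℕ × ℕ) → SExpr
  | none => .infty
  | some (α, n) => sIter n (.var α)

lemma nf_eq_decode (a : SExpr) : nf a = decode (count a) := by
  induction a with
  | var α => rfl
  | infty => rfl
  | s a ih =>
    simp only [nf, count, ih]
    cases hc : count a with
    | none => rfl
    | some p =>
      obtain ⟨α, n⟩ := p
      cases n with
      | zero => rfl
      | succ m => rfl

lemma sle_nf_left (a : SExpr) : SLe a (nf a) := by
  induction a with
  | var α => exact .refl _
  | infty => exact .refl _
  | s a ih =>
    simp only [nf]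
    cases h : nf a with
    | infty => exact .infty _
    | var α => rw [h] at ih; exact .mon ih
    | s b => rw [h] at ih; exact .mon ih

lemma sle_nf_right (a : SExpr) : SLe (nf a) a := by
  induction a with
  | var α => exact .refl _
  | infty => exact .refl _
  | s a ih =>
    simp only [nf]
    cases h : nf a with
    | infty => rw [h] at ih; exact .succ ih
    | var α => rw [h] at ih; exact .mon ih
    | s b => rw [h] at ih; exact .mon ih

/-- a ≃_A b (i.e. a ≤_A b and b ≤_A a) iff a and b have the same normal form
w.r.t. s∞ → ∞. -/
theorem sle_antisymm_iff_nf_eq (a b : SExpr) :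
    (SLe a b ∧ SLe b a) ↔ nf a = nf b := by
  constructor
  · rintro ⟨h1, h2⟩
    rw [nf_eq_decode, nf_eq_decode]
    exact congrArg decode (rel_antisymm (rel_sound h1) (rel_sound h2))
  · intro h
    constructor
    · exact .trans (sle_nf_left a) (h ▸ sle_nf_right b)
    · exact .trans (sle_nf_left b) (h ▸ sle_nf_right a)
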